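/- Let ζ > 0, let X be a set, let C be a class of functions from X to [0,1], and let k be a natural number such that C admits a ζ-sequential fat-shattering tree of depth k. Then for every deterministic online learner L over domain X with feedback alphabet {0,1}, there exist points x_1,…,x_k ∈ X, feedback bits s_1,…,s_k ∈ {0,1}, and a concept c ∈ C such that, setting ŷ_t := L((x_1,s_1),…,(x_{t−1},s_{t−1}); x_t) for each t ∈ [k], one has c(x_t) ≥ ŷ_t + ζ whenever s_t = 1 and c(x_t) ≤ ŷ_t − ζ whenever s_t = 0. In particular |ŷ_t − c(x_t)| ≥ ζ for all t ∈ [k], so every online learner for C can be forced (by an adversary providing only binary directional feedback) to make at least sfat_ζ(C) many ζ-mistakes. -/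

import Mathlib

open MeasureTheory

/-- An `ε`-sequential fat-shattering tree of depth `k` for the class `C`. -/
def HasSfatTree {X : Type*} (C : Set (X → ℝ)) (ε : ℝ) (k : ℕ) : Prop :=
  ∃ (pt : List Bool → X) (th : List Bool → ℝ),
    (∀ w : List Bool, w.length < k → th w ∈ Set.Icc (0 : ℝ) 1) ∧
    ∀ v : Fin k → Bool, ∃ f ∈ C, ∀ i : Fin k,
      (v i = true →
        th ((List.ofFn v).take i.1) + ε ≤ f (pt ((List.ofFn v).take i.1))) ∧
      (v i = false →
        f (pt ((List.ofFn v).take i.1)) ≤ th ((List.ofFn v).take i.1) - ε)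

/-- The adversary's feedback bit given the bit history `l`. -/
noncomputable def advStep {X : Type*} (L : List (X × Bool) → X → ℝ)
    (pt : List Bool → X) (th : List Bool → ℝ) (l : List Bool) : Bool :=
  decide (L ((List.range l.length).map fun j => (pt (l.take j), l.getD j false))
    (pt l) ≤ th l)

/-- The adversary's bit history after `n` rounds. -/
noncomputable def advW {X : Type*} (L : List (X × Bool) → X → ℝ)
    (pt : List Bool → X) (th : List Bool → ℝ) : ℕ → List Bool
  | 0 => []
  | n + 1 => advW L pt th n ++ [advStep L pt th (advW L pt th n)]

theorem advW_succ {X : Type*} (L : List (X × Bool) → X → ℝ)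
    (pt : List Bool → X) (th : List Bool → ℝ) (n : ℕ) :
    advW L pt th (n + 1) = advW L pt th n ++ [advStep L pt th (advW L pt th n)] := by
  rw [advW]

theorem advW_length {X : Type*} (L : List (X × Bool) → X → ℝ)
    (pt : List Bool → X) (th : List Bool → ℝ) (n : ℕ) :
    (advW L pt th n).length = n := by
  induction n with
  | zero => rfl
  | succ n ih => rw [advW_succ]; simp [ih]

theorem advW_take {X : Type*} (L : List (X × Bool) → X → ℝ)
    (pt : List Bool → X) (th : List Bool → ℝ) :
    ∀ n m, m ≤ n → (advW L pt th n).take m = advW L pt th m := by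
  intro n
  induction n with
  | zero => intro m hm; interval_cases m; rfl
  | succ n ih =>
    intro m hm
    rcases Nat.lt_or_ge m (n + 1) with h | h
    · rw [advW_succ, List.take_append_of_le_length (by
        rw [advW_length]; omega)]
      exact ih m (by omega)
    · have : m = n + 1 := by omega
      subst this
      rw [List.take_of_length_le (by rw [advW_length])]

theorem advW_getD {X : Type*} (L : List (X × Bool) → X → ℝ)
    (pt : List Bool → X) (th : List Bool → ℝ) (n j : ℕ) (hj : j < n) :
    (advW L pt th n).getD j false = advStep L pt th (advW L pt th j) := by
  have hlen : j < (advW L pt th n).length := by rw [advW_length]; exact hj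
  rw [List.getD_eq_getElem _ _ hlen]
  have h1 : ((advW L pt th n).take (j + 1))[j]'(by
      simp [List.length_take, advW_length]; omega) = (advW L pt th n)[j] :=
    List.getElem_take
  rw [← h1]
  have h2 : (advW L pt th n).take (j + 1) = advW L pt th (j + 1) :=
    advW_take L pt th n (j + 1) hj
  simp only [h2, advW_succ]
  have hl : (advW L pt th j).length = j := advW_length L pt th j
  rw [List.getElem_append_right (by omega)]
  simp [hl]

theorem stmt2 {X : Type*} (ζ : ℝ) (hζ : 0 < ζ)
    (C : Set (X → ℝ)) (hC : ∀ f ∈ C, ∀ x : X, f x ∈ Set.Icc (0 : ℝ) 1)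
    (k : ℕ) (htree : HasSfatTree C ζ k)
    (L : List (X × Bool) → X → ℝ) (hL : ∀ h x, L h x ∈ Set.Icc (0 : ℝ) 1) :
    ∃ (x : ℕ → X) (s : ℕ → Bool), ∃ c ∈ C, ∀ t < k,
      (s t = true →
        L ((List.range t).map fun j => (x j, s j)) (x t) + ζ ≤ c (x t)) ∧
      (s t = false →
        c (x t) ≤ L ((List.range t).map fun j => (x j, s j)) (x t) - ζ) := by
  obtain ⟨pt, th, hth, hshat⟩ := htree
  set W := advW L pt th with hW
  set s : ℕ → Bool := fun n => advStep L pt th (W n) with hs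
  set x : ℕ → X := fun n => pt (W n) with hx
  -- the v vector
  set v : Fin k → Bool := fun i => s i.1 with hv
  obtain ⟨f, hfC, hf⟩ := hshat v
  refine ⟨x, s, f, hfC, ?_⟩
  -- key: (List.ofFn v).take t = W t for t ≤ k
  have hofn : ∀ t, t ≤ k → (List.ofFn v).take t = W t := by
    intro t
    induction t with
    | zero => intro _; rfl
    | succ t ih =>
      intro ht
      rw [List.take_succ, ih (by omega)]
      have : (List.ofFn v)[t]? = some (s t) := by
        rw [List.getElem?_eq_getElem (by simpa using ht)]
        simp [hv]
      rw [this]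
      rfl
  -- key: histories agree
  have hhist : ∀ t, ((List.range t).map fun j => (x j, s j)) =
      ((List.range (W t).length).map fun j => (pt ((W t).take j), (W t).getD j false)) := by
    intro t
    rw [advW_length]
    apply List.map_congr_left
    intro j hj
    rw [List.mem_range] at hj
    rw [advW_take L pt th t j (by omega), advW_getD L pt th t j hj]
  intro t ht
  have hiv := hf ⟨t, ht⟩
  rw [hofn t (by omega)] at hiv
  have hpred : L ((List.range t).map fun j => (x j, s j)) (x t) = L ((List.range (W t).length).map fun j => (pt ((W t).take j), (W t).getD j false)) (pt (W t)) := by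
    rw [hhist t]
  constructor
  · intro hst
    have h1 : L ((List.range (W t).length).map fun j => (pt ((W t).take j), (W t).getD j false)) (pt (W t)) ≤ th (W t) := by
      have := hst
      simp only [hs, advStep, decide_eq_true_eq] at this
      exact this
    have h2 := (hiv.1 hst)
    rw [hpred]
    linarith
  · intro hst
    have h1 : ¬ L ((List.range (W t).length).map fun j => (pt ((W t).take j), (W t).getD j false)) (pt (W t)) ≤ th (W t) := by
      have := hst
      simp only [hs, advStep, decide_eq_false_iff_not] at this
      exact this
    have h2 := (hiv.2 hst)
    rw [hpred]
    linarith
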